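/- For any four pairwise distinct complex numbers $h_1,h_2,h_3,h_4$, the sum over all $2$-element subsets $I = \{i,j\}$ of $\{1,2,3,4\}$ of $\frac{\prod_{a=0}^{3} (a h_i + (3-a) h_j)}{\prod_{k \notin I} (h_i - h_k)(h_j - h_k)}$ equals $27$. -/

import Mathlib

open Finset

set_option maxHeartbeats 1000000 in
theorem helper (a b c d : ℂ) (hab : a - b ≠ 0) (hac : a - c ≠ 0) (had : a - d ≠ 0)
    (hbc : b - c ≠ 0) (hbd : b - d ≠ 0) (hcd : c - d ≠ 0) :
    (3*b*(a+2*b)*(2*a+b)*(3*a)) / ((a-c)*(b-c)*((a-d)*(b-d))) +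
    (3*c*(a+2*c)*(2*a+c)*(3*a)) / ((a-b)*(c-b)*((a-d)*(c-d))) +
    (3*d*(a+2*d)*(2*a+d)*(3*a)) / ((a-b)*(d-b)*((a-c)*(d-c))) +
    (3*c*(b+2*c)*(2*b+c)*(3*b)) / ((b-a)*(c-a)*((b-d)*(c-d))) +
    (3*d*(b+2*d)*(2*b+d)*(3*b)) / ((b-a)*(d-a)*((b-c)*(d-c))) +
    (3*d*(c+2*d)*(2*c+d)*(3*c)) / ((c-a)*(d-a)*((c-b)*(d-b))) = 27 := by
  have hba : b - a ≠ 0 := fun h => hab (by linear_combination -h)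
  have hca : c - a ≠ 0 := fun h => hac (by linear_combination -h)
  have hda : d - a ≠ 0 := fun h => had (by linear_combination -h)
  have hcb : c - b ≠ 0 := fun h => hbc (by linear_combination -h)
  have hdb : d - b ≠ 0 := fun h => hbd (by linear_combination -h)
  have hdc : d - c ≠ 0 := fun h => hcd (by linear_combination -h)
  have hD : (a-b)*(a-c)*(a-d)*(b-c)*(b-d)*(c-d) ≠ 0 :=
    mul_ne_zero (mul_ne_zero (mul_ne_zero (mul_ne_zero (mul_ne_zero hab hac) had) hbc) hbd) hcd
  have e1 : (3*b*(a+2*b)*(2*a+b)*(3*a)) / ((a-c)*(b-c)*((a-d)*(b-d)))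
      = (3*b*(a+2*b)*(2*a+b)*(3*a)*((a-b)*(c-d))) / ((a-b)*(a-c)*(a-d)*(b-c)*(b-d)*(c-d)) := by
    rw [div_eq_div_iff (mul_ne_zero (mul_ne_zero hac hbc) (mul_ne_zero had hbd)) hD]; ring
  have e2 : (3*c*(a+2*c)*(2*a+c)*(3*a)) / ((a-b)*(c-b)*((a-d)*(c-d)))
      = (-(3*c*(a+2*c)*(2*a+c)*(3*a))*((a-c)*(b-d))) / ((a-b)*(a-c)*(a-d)*(b-c)*(b-d)*(c-d)) := by
    rw [div_eq_div_iff (mul_ne_zero (mul_ne_zero hab hcb) (mul_ne_zero had hcd)) hD]; ring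
  have e3 : (3*d*(a+2*d)*(2*a+d)*(3*a)) / ((a-b)*(d-b)*((a-c)*(d-c)))
      = (3*d*(a+2*d)*(2*a+d)*(3*a)*((a-d)*(b-c))) / ((a-b)*(a-c)*(a-d)*(b-c)*(b-d)*(c-d)) := by
    rw [div_eq_div_iff (mul_ne_zero (mul_ne_zero hab hdb) (mul_ne_zero hac hdc)) hD]; ring
  have e4 : (3*c*(b+2*c)*(2*b+c)*(3*b)) / ((b-a)*(c-a)*((b-d)*(c-d)))
      = (3*c*(b+2*c)*(2*b+c)*(3*b)*((a-d)*(b-c))) / ((a-b)*(a-c)*(a-d)*(b-c)*(b-d)*(c-d)) := by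
    rw [div_eq_div_iff (mul_ne_zero (mul_ne_zero hba hca) (mul_ne_zero hbd hcd)) hD]; ring
  have e5 : (3*d*(b+2*d)*(2*b+d)*(3*b)) / ((b-a)*(d-a)*((b-c)*(d-c)))
      = (-(3*d*(b+2*d)*(2*b+d)*(3*b))*((a-c)*(b-d))) / ((a-b)*(a-c)*(a-d)*(b-c)*(b-d)*(c-d)) := by
    rw [div_eq_div_iff (mul_ne_zero (mul_ne_zero hba hda) (mul_ne_zero hbc hdc)) hD]; ring
  have e6 : (3*d*(c+2*d)*(2*c+d)*(3*c)) / ((c-a)*(d-a)*((c-b)*(d-b)))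
      = (3*d*(c+2*d)*(2*c+d)*(3*c)*((a-b)*(c-d))) / ((a-b)*(a-c)*(a-d)*(b-c)*(b-d)*(c-d)) := by
    rw [div_eq_div_iff (mul_ne_zero (mul_ne_zero hca hda) (mul_ne_zero hcb hdb)) hD]; ring
  rw [e1, e2, e3, e4, e5, e6, ← add_div, ← add_div, ← add_div,
    ← add_div, ← add_div, div_eq_iff hD]
  ring


set_option maxHeartbeats 2000000 in
theorem lines_on_cubic_surface (h : Fin 4 → ℂ) (hdist : Function.Injective h) :
    ∑ i : Fin 4, ∑ j : Fin 4,
      (if i < j then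
        (∏ a ∈ Finset.range 4, ((a : ℂ) * h i + ((3 - a : ℕ) : ℂ) * h j)) /
          ∏ k ∈ Finset.univ \ {i, j}, ((h i - h k) * (h j - h k))
      else 0) = 27 := by
  have hne : ∀ i j : Fin 4, i ≠ j → h i - h j ≠ 0 := fun i j hij hc => hij (hdist (sub_eq_zero.mp hc))
  have h01 := hne 0 1 (by decide)
  have h02 := hne 0 2 (by decide)
  have h03 := hne 0 3 (by decide)
  have h12 := hne 1 2 (by decide)
  have h13 := hne 1 3 (by decide)
  have h23 := hne 2 3 (by decide)
  simp only [Fin.sum_univ_four, Finset.prod_range_succ, Finset.prod_range_zero]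
  norm_num
  simp only [show ((0:Fin 4) < 1) = True from by decide, show ((0:Fin 4) < 2) = True from by decide,
    show ((0:Fin 4) < 3) = True from by decide, show ((1:Fin 4) < 2) = True from by decide,
    show ((1:Fin 4) < 3) = True from by decide, show ((2:Fin 4) < 3) = True from by decide,
    if_true]
  simp only [show ((2:Fin 4) = 0) = False from by decide, show ((3:Fin 4) = 0) = False from by decide,
    show ((3:Fin 4) < 2) = False from by decide, if_false,
    show (Finset.univ \ {0, 1} : Finset (Fin 4)) = {2, 3} from by decide,
    show (Finset.univ \ {0, 2} : Finset (Fin 4)) = {1, 3} from by decide,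
    show (Finset.univ \ {0, 3} : Finset (Fin 4)) = {1, 2} from by decide,
    show (Finset.univ \ {1, 2} : Finset (Fin 4)) = {0, 3} from by decide,
    show (Finset.univ \ {1, 3} : Finset (Fin 4)) = {0, 2} from by decide,
    show (Finset.univ \ {2, 3} : Finset (Fin 4)) = {0, 1} from by decide]
  simp only [Finset.prod_pair (show (2:Fin 4) ≠ 3 by decide),
    Finset.prod_pair (show (1:Fin 4) ≠ 3 by decide), Finset.prod_pair (show (1:Fin 4) ≠ 2 by decide),
    Finset.prod_pair (show (0:Fin 4) ≠ 3 by decide), Finset.prod_pair (show (0:Fin 4) ≠ 2 by decide),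
    Finset.prod_pair (show (0:Fin 4) ≠ 1 by decide)]
  have := helper (h 0) (h 1) (h 2) (h 3) h01 h02 h03 h12 h13 h23
  linear_combination this
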